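/- Let S_1, ..., S_k be 0-dimensional simplicial complexes each with at least 2 vertices, X = S_1 ∗ ... ∗ S_k their join, Δ a maximal (k−1)-simplex of X with vertices s_i ∈ S_i, and Y the complex X with the interior of Δ removed. Then the inclusion ∂Δ → Y is nullhomotopic. -/

import Mathlib

/-- A point of the join `S_1 ∗ ⋯ ∗ S_k` of the `0`-dimensional complexes with
vertex sets `S i`: a convex combination of vertices using at most one vertex
from each factor. -/
def JoinPt {k : ℕ} (S : Fin k → Type) (f : (Σ i, S i) → ℝ) : Prop :=
  (∀ v, 0 ≤ f v) ∧ (∑ᶠ v, f v = 1) ∧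
    ∀ (i : Fin k) (a b : S i), f ⟨i, a⟩ ≠ 0 → f ⟨i, b⟩ ≠ 0 → a = b

/-- The vertex set of the maximal `(k-1)`-simplex `Δ` with vertices `s i ∈ S i`. -/
def DeltaV {k : ℕ} (S : Fin k → Type) (s : ∀ i, S i) : Set (Σ i, S i) :=
  Set.range fun i => (⟨i, s i⟩ : Σ i, S i)

/-- `Y`: the join `X = S_1 ∗ ⋯ ∗ S_k` with the (open) interior of the maximal
simplex `Δ` removed. -/
def Yspace {k : ℕ} (S : Fin k → Type) (s : ∀ i, S i) : Set ((Σ i, S i) → ℝ) :=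
  {f | JoinPt S f ∧ ¬(∀ v, f v ≠ 0 ↔ v ∈ DeltaV S s)}

/-- The boundary sphere `∂Δ` of the maximal simplex `Δ`: points supported on a
proper subset of the vertices of `Δ`. -/
def BoundaryDelta {k : ℕ} (S : Fin k → Type) (s : ∀ i, S i) : Set ((Σ i, S i) → ℝ) :=
  {f | JoinPt S f ∧ (∀ v, f v ≠ 0 → v ∈ DeltaV S s) ∧ ∃ i : Fin k, f ⟨i, s i⟩ = 0}

lemma boundaryDelta_subset_Y {k : ℕ} (S : Fin k → Type) (s : ∀ i, S i) :
    BoundaryDelta S s ⊆ Yspace S s := by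
  rintro f ⟨hJ, hsupp, i, hi⟩
  exact ⟨hJ, fun hall => (hall ⟨i, s i⟩).mpr ⟨i, rfl⟩ hi⟩

/-- The inclusion `∂Δ → Y`. -/
def inclBoundary {k : ℕ} (S : Fin k → Type) (s : ∀ i, S i) :
    C(BoundaryDelta S s, Yspace S s) :=
  ⟨Set.inclusion (boundaryDelta_subset_Y S s),
    continuous_inclusion (boundaryDelta_subset_Y S s)⟩

/-- `X` is `m`-connected: nonempty, path-connected, and `π_i X = 0` for `1 ≤ i ≤ m`.
For `m = -1` this just means nonempty; for `m < -1` it is vacuous. -/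
def NConnectedSpace (m : ℤ) (X : Type*) [TopologicalSpace X] : Prop :=
  (-1 ≤ m → Nonempty X) ∧ (0 ≤ m → PathConnectedSpace X) ∧
    ∀ i : ℕ, 0 < i → (i : ℤ) ≤ m → ∀ x : X, Subsingleton (HomotopyGroup (Fin i) X x)


noncomputable section

/-- `g_i(t) = (1-t) f(s_i) - t`. -/
def gAux {k : ℕ} (S : Fin k → Type) (s : ∀ i, S i) (t : ℝ) (f : (Σ i, S i) → ℝ)
    (i : Fin k) : ℝ := (1 - t) * f ⟨i, s i⟩ - t

noncomputable def NAux {k : ℕ} (S : Fin k → Type) (s : ∀ i, S i) (t : ℝ) (f : (Σ i, S i) → ℝ) : ℝ :=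
  ∑ i, |gAux S s t f i|

open Classical in
noncomputable def HAux {k : ℕ} (S : Fin k → Type) (s τ : ∀ i, S i) (t : ℝ) (f : (Σ i, S i) → ℝ) :
    (Σ i, S i) → ℝ := fun v =>
  (if v.2 = s v.1 then max (gAux S s t f v.1) 0
   else if v.2 = τ v.1 then max (-gAux S s t f v.1) 0 else 0) / NAux S s t f

open Classical in
lemma sumS_eq {k : ℕ} (S : Fin k → Type) (s : ∀ i, S i) (f : (Σ i, S i) → ℝ)
    (hsupp : ∀ v, f v ≠ 0 → v ∈ DeltaV S s) :
    ∑ᶠ v, f v = ∑ i, f ⟨i, s i⟩ := by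
  rw [finsum_eq_finset_sum_of_support_subset f
    (s := Finset.univ.image fun i => (⟨i, s i⟩ : Σ i, S i)) ?_]
  · exact Finset.sum_image (by intro x _ y _ h; exact congrArg Sigma.fst h)
  · intro v hv
    rcases hsupp v hv with ⟨i, rfl⟩
    simp

lemma NAux_pos {k : ℕ} {S : Fin k → Type} {s : ∀ i, S i} {t : ℝ} {f : (Σ i, S i) → ℝ}
    (hf : f ∈ BoundaryDelta S s) : 0 < NAux S s t f := by
  obtain ⟨⟨hpos, hsum, hone⟩, hsupp, j, hj⟩ := hf
  rcases lt_or_eq_of_le (Finset.sum_nonneg fun i _ => abs_nonneg (gAux S s t f i)) with h | h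
  · exact h
  · exfalso
    have hall : ∀ i : Fin k, gAux S s t f i = 0 := by
      intro i
      exact abs_eq_zero.mp
        ((Finset.sum_eq_zero_iff_of_nonneg fun i _ => abs_nonneg _).mp h.symm i
          (Finset.mem_univ i))
    have ht : t = 0 := by have := hall j; simp [gAux, hj] at this; linarith
    have hz : ∀ i : Fin k, f ⟨i, s i⟩ = 0 := by
      intro i; have := hall i; simp [gAux, ht] at this; linarith
    have h1 := sumS_eq S s f hsupp
    rw [hsum, Finset.sum_eq_zero fun i _ => hz i] at h1
    norm_num at h1

open Classical in
lemma HAux_mem {k : ℕ} {S : Fin k → Type} {s τ : ∀ i, S i} (hτ : ∀ i, τ i ≠ s i)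
    {t : ℝ} {f : (Σ i, S i) → ℝ} (hN : 0 < NAux S s t f)
    (hj : ∃ j, gAux S s t f j ≤ 0) :
    HAux S s τ t f ∈ Yspace S s := by
  have hsign : ∀ (i : Fin k) (c : S i), HAux S s τ t f ⟨i, c⟩ ≠ 0 →
      (c = s i ∧ 0 < gAux S s t f i) ∨ (c = τ i ∧ gAux S s t f i < 0) := by
    intro i c hc
    unfold HAux at hc
    split_ifs at hc with h1 h2
    · left
      refine ⟨h1, ?_⟩
      by_contra hg
      push_neg at hg
      rw [max_eq_right hg, zero_div] at hc
      exact hc rfl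
    · right
      refine ⟨h2, ?_⟩
      by_contra hg
      push_neg at hg
      rw [max_eq_right (neg_nonpos.mpr hg), zero_div] at hc
      exact hc rfl
    · rw [zero_div] at hc; exact absurd rfl hc
  refine ⟨⟨?_, ?_, ?_⟩, ?_⟩
  · intro v
    apply div_nonneg _ hN.le
    split_ifs <;> simp [le_max_right]
  · -- sum equals 1
    have hsub : Function.support (HAux S s τ t f) ⊆
        ((Finset.univ.image fun i => (⟨i, s i⟩ : Σ i, S i)) ∪
         (Finset.univ.image fun i => (⟨i, τ i⟩ : Σ i, S i)) : Finset (Σ i, S i)) := by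
      rintro ⟨i, c⟩ hv
      rcases hsign i c hv with ⟨rfl, -⟩ | ⟨rfl, -⟩
      · exact Finset.mem_union_left _ (Finset.mem_image.mpr ⟨i, Finset.mem_univ i, rfl⟩)
      · exact Finset.mem_union_right _ (Finset.mem_image.mpr ⟨i, Finset.mem_univ i, rfl⟩)
    rw [finsum_eq_finset_sum_of_support_subset _ hsub]
    have hdisj : Disjoint (Finset.univ.image fun i => (⟨i, s i⟩ : Σ i, S i))
        (Finset.univ.image fun i => (⟨i, τ i⟩ : Σ i, S i)) := by
      rw [Finset.disjoint_left]
      rintro a ha hb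
      rcases Finset.mem_image.mp ha with ⟨i, -, rfl⟩
      rcases Finset.mem_image.mp hb with ⟨j, -, hji⟩
      have hij : j = i := congrArg Sigma.fst hji
      subst hij
      simp at hji
      exact hτ j hji
    rw [Finset.sum_union hdisj,
      Finset.sum_image (by intro x _ y _ h; exact congrArg Sigma.fst h),
      Finset.sum_image (by intro x _ y _ h; exact congrArg Sigma.fst h)]
    have h1 : ∀ i : Fin k, HAux S s τ t f ⟨i, s i⟩ = max (gAux S s t f i) 0 / NAux S s t f := by
      intro i; unfold HAux; rw [if_pos rfl]
    have h2 : ∀ i : Fin k, HAux S s τ t f ⟨i, τ i⟩ =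
        max (-gAux S s t f i) 0 / NAux S s t f := by
      intro i; unfold HAux; rw [if_neg (hτ i), if_pos rfl]
    rw [Finset.sum_congr rfl fun i _ => h1 i, Finset.sum_congr rfl fun i _ => h2 i,
      ← Finset.sum_add_distrib]
    have h3 : ∀ i : Fin k, max (gAux S s t f i) 0 / NAux S s t f +
        max (-gAux S s t f i) 0 / NAux S s t f = |gAux S s t f i| / NAux S s t f := by
      intro i
      rw [← add_div, max_zero_add_max_neg_zero_eq_abs_self]
    rw [Finset.sum_congr rfl fun i _ => h3 i, ← Finset.sum_div]
    exact div_self hN.ne'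
  · intro i a b ha hb
    rcases hsign i a ha with ⟨rfl, hga⟩ | ⟨rfl, hga⟩ <;>
      rcases hsign i b hb with ⟨rfl, hgb⟩ | ⟨rfl, hgb⟩
    · rfl
    · exact absurd (lt_trans hgb hga) (lt_irrefl _)
    · exact absurd (lt_trans hga hgb) (lt_irrefl _)
    · rfl
  · rcases hj with ⟨j, hgj⟩
    intro hall
    apply (hall ⟨j, s j⟩).mpr ⟨j, rfl⟩
    unfold HAux
    rw [if_pos rfl, max_eq_right hgj, zero_div]

open Classical in
lemma HAux_zero {k : ℕ} {S : Fin k → Type} {s τ : ∀ i, S i} (hτ : ∀ i, τ i ≠ s i)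
    {f : (Σ i, S i) → ℝ} (hf : f ∈ BoundaryDelta S s) :
    HAux S s τ 0 f = f := by
  obtain ⟨⟨hpos, hsum, hone⟩, hsupp, hj⟩ := hf
  have hN : NAux S s 0 f = 1 := by
    unfold NAux
    have habs : ∀ i : Fin k, |gAux S s 0 f i| = f ⟨i, s i⟩ := by
      intro i
      have hg : gAux S s 0 f i = f ⟨i, s i⟩ := by simp [gAux]
      rw [hg, abs_of_nonneg (hpos _)]
    rw [Finset.sum_congr rfl fun i _ => habs i]
    have h1 := sumS_eq S s f hsupp
    rw [hsum] at h1
    exact h1.symm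
  funext v
  obtain ⟨i, a⟩ := v
  unfold HAux
  rw [hN, div_one]
  by_cases h1 : a = s i
  · subst h1
    rw [if_pos rfl]
    have : gAux S s 0 f i = f ⟨i, s i⟩ := by simp [gAux]
    rw [this, max_eq_left (hpos _)]
  · rw [if_neg h1]
    have hfa : f ⟨i, a⟩ = 0 := by
      by_contra hne
      rcases hsupp _ hne with ⟨j, hj'⟩
      have hji : j = i := congrArg Sigma.fst hj'
      subst hji
      simp at hj'
      exact h1 hj'.symm
    by_cases h2 : a = τ i
    · rw [if_pos h2, hfa]
      have : gAux S s 0 f i = f ⟨i, s i⟩ := by simp [gAux]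
      rw [this, max_eq_right (neg_nonpos.mpr (hpos _))]
    · rw [if_neg h2, hfa]

open Classical in
lemma HAux_one {k : ℕ} (S : Fin k → Type) (s τ : ∀ i, S i) (f : (Σ i, S i) → ℝ) :
    HAux S s τ 1 f = HAux S s τ 1 (fun _ => 0) := by
  funext v
  unfold HAux NAux gAux
  norm_num

open Classical in
lemma HAux_continuous {k : ℕ} (S : Fin k → Type) (s τ : ∀ i, S i) :
    Continuous fun p : (unitInterval × (BoundaryDelta S s)) =>
      HAux S s τ (p.1 : ℝ) (p.2 : (Σ i, S i) → ℝ) := by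
  have hgc : ∀ i : Fin k, Continuous fun p : (unitInterval × (BoundaryDelta S s)) =>
      gAux S s (p.1 : ℝ) (p.2 : (Σ i, S i) → ℝ) i := by
    intro i
    unfold gAux
    have ht : Continuous fun p : (unitInterval × (BoundaryDelta S s)) => (p.1 : ℝ) :=
      continuous_subtype_val.comp continuous_fst
    have hfc : Continuous fun p : (unitInterval × (BoundaryDelta S s)) =>
        (p.2 : (Σ i, S i) → ℝ) ⟨i, s i⟩ :=
      (continuous_apply (⟨i, s i⟩ : Σ i, S i)).comp
        (continuous_subtype_val.comp continuous_snd)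
    exact ((continuous_const.sub ht).mul hfc).sub ht
  have hNc : Continuous fun p : (unitInterval × (BoundaryDelta S s)) =>
      NAux S s (p.1 : ℝ) (p.2 : (Σ i, S i) → ℝ) := by
    unfold NAux
    exact continuous_finset_sum _ fun i _ => (hgc i).abs
  have hNne : ∀ p : (unitInterval × (BoundaryDelta S s)),
      NAux S s (p.1 : ℝ) (p.2 : (Σ i, S i) → ℝ) ≠ 0 := fun p => (NAux_pos p.2.2).ne'
  apply continuous_pi
  intro v
  unfold HAux
  apply Continuous.div _ hNc hNne
  split_ifs with h1 h2
  · exact (hgc v.1).max continuous_const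
  · exact (hgc v.1).neg.max continuous_const
  · exact continuous_const

lemma HAux_mem' {k : ℕ} {S : Fin k → Type} {s τ : ∀ i, S i} (hτ : ∀ i, τ i ≠ s i)
    (t : unitInterval) {f : (Σ i, S i) → ℝ} (hf : f ∈ BoundaryDelta S s) :
    HAux S s τ (t : ℝ) f ∈ Yspace S s := by
  apply HAux_mem hτ (NAux_pos hf)
  obtain ⟨-, -, j, hj⟩ := hf
  refine ⟨j, ?_⟩
  simp only [gAux, hj, mul_zero, zero_sub, neg_nonpos]
  exact t.2.1

end


/-- Let `S_1, …, S_k` be `0`-dimensional complexes each with at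
least two vertices, `X = S_1 ∗ ⋯ ∗ S_k` their join, `Δ` a maximal `(k−1)`-simplex
with vertices `s_i ∈ S_i`, and `Y` the complex `X` with the interior of `Δ`
removed. Then the inclusion `∂Δ → Y` is nullhomotopic. -/

theorem inclusion_boundary_nullhomotopic (k : ℕ) (hk : 1 ≤ k)
    (S : Fin k → Type) (hS : ∀ i, ∃ a b : S i, a ≠ b) (s : ∀ i, S i) :
    (inclBoundary S s).Nullhomotopic := by
  classical
  have hex : ∀ i, ∃ c : S i, c ≠ s i := by
    intro i
    rcases hS i with ⟨a, b, hab⟩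
    by_cases h : a = s i
    · exact ⟨b, fun hb => hab (h.trans hb.symm)⟩
    · exact ⟨a, h⟩
  choose τ hτ using hex
  have hy0mem : HAux S s τ 1 (fun _ => 0) ∈ Yspace S s := by
    apply HAux_mem hτ
    · have : NAux S s 1 (fun _ => 0) = k := by simp [NAux, gAux]
      rw [this]
      exact_mod_cast Nat.pos_of_ne_zero (by omega)
    · exact ⟨⟨0, hk⟩, by simp [gAux]⟩
  refine ⟨⟨_, hy0mem⟩, ⟨⟨⟨fun p => ⟨HAux S s τ (p.1 : ℝ) (p.2 : (Σ i, S i) → ℝ),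
      HAux_mem' hτ p.1 p.2.2⟩, ?_⟩, ?_, ?_⟩⟩⟩
  · exact (HAux_continuous S s τ).subtype_mk _
  · intro x
    apply Subtype.ext
    show HAux S s τ ((0 : unitInterval) : ℝ) (x : (Σ i, S i) → ℝ) = _
    rw [Set.Icc.coe_zero, HAux_zero hτ x.2]
    rfl
  · intro x
    apply Subtype.ext
    show HAux S s τ ((1 : unitInterval) : ℝ) (x : (Σ i, S i) → ℝ) = _
    rw [Set.Icc.coe_one, HAux_one]
    rfl
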